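/- arXiv:2501.13885 — 3 statements merged into one kernel-verified Lean document; each statement's English description precedes it below -/
import Mathlib

section
/- Let A be a unital *-subalgebra of B(H) for a finite-dimensional Hilbert space H, with orthogonal conditional expectation E onto A factored as E = J ∘ R where R: B(H) → Ǎ and J: Ǎ → B(H) are the CPTP factors from the Wedderburn decomposition. Then for every A in Ǎ and every X in B(H), R(X · J(A)) = J*(X) · A and R(J(A) · X) = A · J*(X), where J* denotes the Hilbert–Schmidt adjoint of J. -/
/-!
STATEMENT 0: For the CPTP factors `R`, `J` of the orthogonal conditional expectation onto a
unital *-subalgebra `A` of `B(H)` (given by its Wedderburn data: block isometries `V k` of the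
original space and `W k` of the reduced space), for every `A ∈ Ǎ` (block-diagonal matrix of the
reduced space) and every `X ∈ B(H)`:
`R (X * J A) = J* X * A` and `R (J A * X) = A * J* X`.
-/

open Matrix
open scoped Kronecker BigOperators

noncomputable section

abbrev Mat (n : ℕ) : Type := Matrix (Fin n) (Fin n) ℂ

/-- Partial trace over the second tensor factor. -/
def ptrG {a b : ℕ} (M : Matrix (Fin a × Fin b) (Fin a × Fin b) ℂ) :
    Matrix (Fin a) (Fin a) ℂ :=
  Matrix.of fun i j => ∑ g : Fin b, M (i, g) (j, g)

variable {K n m : ℕ} {dF dG : Fin K → ℕ}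

/-- The reduction map `R : B(H) → Ǎ`, `R(X) = ⊕ₖ tr_{G,k}(Vₖ* X Vₖ)`. -/
def Rmap (V : ∀ k : Fin K, Matrix (Fin n) (Fin (dF k) × Fin (dG k)) ℂ)
    (W : ∀ k : Fin K, Matrix (Fin m) (Fin (dF k)) ℂ) (X : Mat n) : Mat m :=
  ∑ k : Fin K, W k * ptrG ((V k)ᴴ * X * V k) * (W k)ᴴ

/-- The injection map `J : Ǎ → B(H)`, `J(ρ̌) = ⊕ₖ ρ̌ₖ ⊗ 1_{G,k}/dim H_{G,k}`. -/
def Jmap (V : ∀ k : Fin K, Matrix (Fin n) (Fin (dF k) × Fin (dG k)) ℂ)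
    (W : ∀ k : Fin K, Matrix (Fin m) (Fin (dF k)) ℂ) (ρ : Mat m) : Mat n :=
  ∑ k : Fin K, V k *
    (((W k)ᴴ * ρ * W k) ⊗ₖ (((dG k : ℂ))⁻¹ • (1 : Matrix (Fin (dG k)) (Fin (dG k)) ℂ))) *
    (V k)ᴴ

/-- The Hilbert–Schmidt adjoint of `J`, `J*(X) = ⊕ₖ tr_{G,k}(Vₖ* X Vₖ)/dim H_{G,k}`. -/
def Jstar (V : ∀ k : Fin K, Matrix (Fin n) (Fin (dF k) × Fin (dG k)) ℂ)
    (W : ∀ k : Fin K, Matrix (Fin m) (Fin (dF k)) ℂ) (X : Mat n) : Mat m :=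
  ∑ k : Fin K, ((dG k : ℂ))⁻¹ • (W k * ptrG ((V k)ᴴ * X * V k) * (W k)ᴴ)

/-- Membership in the reduced algebra `Ǎ = ⊕ₖ B(H_{F,k})`: block-diagonal matrices. -/
def IsBlockDiag (W : ∀ k : Fin K, Matrix (Fin m) (Fin (dF k)) ℂ) (ρ : Mat m) : Prop :=
  ρ = ∑ k : Fin K, (W k * (W k)ᴴ) * ρ * (W k * (W k)ᴴ)

lemma ptrG_mul_kron {a b : ℕ} (M : Matrix (Fin a × Fin b) (Fin a × Fin b) ℂ)
    (C : Matrix (Fin a) (Fin a) ℂ) (c : ℂ) :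
    ptrG (M * (C ⊗ₖ (c • (1 : Matrix (Fin b) (Fin b) ℂ)))) = c • (ptrG M * C) := by
  ext i j
  simp [ptrG, Matrix.mul_apply, Matrix.one_apply, Fintype.sum_prod_type, mul_ite,
    Finset.mul_sum, Finset.sum_comm (γ := Fin b)]
  refine Finset.sum_congr rfl fun p _ => ?_
  rw [Finset.sum_mul, Finset.mul_sum]
  exact Finset.sum_congr rfl fun g _ => by ring

lemma ptrG_kron_mul {a b : ℕ} (M : Matrix (Fin a × Fin b) (Fin a × Fin b) ℂ)
    (C : Matrix (Fin a) (Fin a) ℂ) (c : ℂ) :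
    ptrG ((C ⊗ₖ (c • (1 : Matrix (Fin b) (Fin b) ℂ))) * M) = c • (C * ptrG M) := by
  ext i j
  simp [ptrG, Matrix.mul_apply, Matrix.one_apply, Fintype.sum_prod_type, ite_mul,
    Finset.mul_sum]
  rw [Finset.sum_comm]
  refine Finset.sum_congr rfl fun p _ => ?_
  exact Finset.sum_congr rfl fun g _ => by ring

theorem reduction_injection_module_property
    (V : ∀ k : Fin K, Matrix (Fin n) (Fin (dF k) × Fin (dG k)) ℂ)
    (W : ∀ k : Fin K, Matrix (Fin m) (Fin (dF k)) ℂ)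
    (hVortho : ∀ k, (V k)ᴴ * V k = 1)
    (hVdisj : ∀ j k, j ≠ k → (V j)ᴴ * V k = 0)
    (hVcomplete : ∑ k : Fin K, V k * (V k)ᴴ = 1)
    (hWortho : ∀ k, (W k)ᴴ * W k = 1)
    (hWdisj : ∀ j k, j ≠ k → (W j)ᴴ * W k = 0)
    (hWcomplete : ∑ k : Fin K, W k * (W k)ᴴ = 1)
    (hdG : ∀ k, 0 < dG k)
    (X : Mat n) (A : Mat m) (hA : IsBlockDiag W A) :
    Rmap V W (X * Jmap V W A) = Jstar V W X * A ∧
    Rmap V W (Jmap V W A * X) = A * Jstar V W X := by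
  -- block compressions of A
  have hAW : ∀ k, (W k)ᴴ * A = (W k)ᴴ * A * (W k * (W k)ᴴ) := by
    intro k
    conv_lhs => rw [hA]
    rw [Matrix.mul_sum, Finset.sum_eq_single k]
    · rw [show (W k)ᴴ * ((W k * (W k)ᴴ) * A * (W k * (W k)ᴴ)) =
        ((W k)ᴴ * W k) * ((W k)ᴴ * A * (W k * (W k)ᴴ)) by simp only [Matrix.mul_assoc],
        hWortho, Matrix.one_mul]
    · intro j _ hj
      rw [show (W k)ᴴ * ((W j * (W j)ᴴ) * A * (W j * (W j)ᴴ)) =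
        ((W k)ᴴ * W j) * ((W j)ᴴ * A * (W j * (W j)ᴴ)) by simp only [Matrix.mul_assoc],
        hWdisj k j hj.symm, Matrix.zero_mul]
    · simp
  have hWA : ∀ k, A * W k = (W k * (W k)ᴴ) * A * W k := by
    intro k
    conv_lhs => rw [hA]
    rw [Matrix.sum_mul, Finset.sum_eq_single k]
    · rw [show (W k * (W k)ᴴ) * A * (W k * (W k)ᴴ) * W k =
        (W k * (W k)ᴴ) * A * (W k * ((W k)ᴴ * W k)) by simp only [Matrix.mul_assoc],
        hWortho, Matrix.mul_one]
    · intro j _ hj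
      rw [show (W j * (W j)ᴴ) * A * (W j * (W j)ᴴ) * W k =
        ((W j * (W j)ᴴ) * A * W j) * ((W j)ᴴ * W k) by simp only [Matrix.mul_assoc],
        hWdisj j k hj, Matrix.mul_zero]
    · simp
  have key1 : ∀ k, (V k)ᴴ * (X * Jmap V W A) * V k =
      ((V k)ᴴ * X * V k) *
        (((W k)ᴴ * A * W k) ⊗ₖ (((dG k : ℂ))⁻¹ • (1 : Matrix (Fin (dG k)) (Fin (dG k)) ℂ))) := by
    intro k
    rw [Jmap, Matrix.mul_sum, Matrix.mul_sum, Matrix.sum_mul, Finset.sum_eq_single k]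
    · rw [show (V k)ᴴ * (X * (V k * (((W k)ᴴ * A * W k) ⊗ₖ (((dG k : ℂ))⁻¹ • (1 : Matrix (Fin (dG k)) (Fin (dG k)) ℂ))) * (V k)ᴴ)) *
          V k = ((V k)ᴴ * X * V k) * (((W k)ᴴ * A * W k) ⊗ₖ (((dG k : ℂ))⁻¹ • (1 : Matrix (Fin (dG k)) (Fin (dG k)) ℂ))) *
          ((V k)ᴴ * V k) by simp only [Matrix.mul_assoc],
        hVortho, Matrix.mul_one]
    · intro j _ hj
      rw [show (V k)ᴴ * (X * (V j * (((W j)ᴴ * A * W j) ⊗ₖ (((dG j : ℂ))⁻¹ • (1 : Matrix (Fin (dG j)) (Fin (dG j)) ℂ))) * (V j)ᴴ)) *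
          V k = ((V k)ᴴ * X * V j * (((W j)ᴴ * A * W j) ⊗ₖ (((dG j : ℂ))⁻¹ • (1 : Matrix (Fin (dG j)) (Fin (dG j)) ℂ)))) *
          ((V j)ᴴ * V k) by simp only [Matrix.mul_assoc],
        hVdisj j k hj, Matrix.mul_zero]
    · simp
  have key2 : ∀ k, (V k)ᴴ * (Jmap V W A * X) * V k =
      (((W k)ᴴ * A * W k) ⊗ₖ (((dG k : ℂ))⁻¹ • (1 : Matrix (Fin (dG k)) (Fin (dG k)) ℂ))) *
        ((V k)ᴴ * X * V k) := by
    intro k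
    rw [Jmap, Matrix.sum_mul, Matrix.mul_sum, Matrix.sum_mul, Finset.sum_eq_single k]
    · rw [show (V k)ᴴ * (V k * (((W k)ᴴ * A * W k) ⊗ₖ (((dG k : ℂ))⁻¹ • (1 : Matrix (Fin (dG k)) (Fin (dG k)) ℂ))) * (V k)ᴴ * X) *
          V k = ((V k)ᴴ * V k) * ((((W k)ᴴ * A * W k) ⊗ₖ (((dG k : ℂ))⁻¹ • (1 : Matrix (Fin (dG k)) (Fin (dG k)) ℂ))) *
          ((V k)ᴴ * X * V k)) by simp only [Matrix.mul_assoc],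
        hVortho, Matrix.one_mul]
    · intro j _ hj
      rw [show (V k)ᴴ * (V j * (((W j)ᴴ * A * W j) ⊗ₖ (((dG j : ℂ))⁻¹ • (1 : Matrix (Fin (dG j)) (Fin (dG j)) ℂ))) * (V j)ᴴ * X) *
          V k = ((V k)ᴴ * V j) * ((((W j)ᴴ * A * W j) ⊗ₖ (((dG j : ℂ))⁻¹ • (1 : Matrix (Fin (dG j)) (Fin (dG j)) ℂ))) *
          ((V j)ᴴ * X * V k)) by simp only [Matrix.mul_assoc],
        hVdisj k j hj.symm, Matrix.zero_mul]
    · simp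
  constructor
  · rw [Rmap, Jstar, Matrix.sum_mul]
    refine Finset.sum_congr rfl fun k _ => ?_
    rw [key1 k, ptrG_mul_kron, Matrix.mul_smul, Matrix.smul_mul, Matrix.smul_mul]
    congr 1
    rw [show W k * (ptrG ((V k)ᴴ * X * V k) * ((W k)ᴴ * A * W k)) * (W k)ᴴ =
        W k * ptrG ((V k)ᴴ * X * V k) * ((W k)ᴴ * A * (W k * (W k)ᴴ)) by
      simp only [Matrix.mul_assoc], ← hAW k]
    simp only [Matrix.mul_assoc]
  · rw [Rmap, Jstar, Matrix.mul_sum]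
    refine Finset.sum_congr rfl fun k _ => ?_
    rw [key2 k, ptrG_kron_mul, Matrix.mul_smul, Matrix.smul_mul, Matrix.mul_smul]
    congr 1
    rw [show W k * (((W k)ᴴ * A * W k) * ptrG ((V k)ᴴ * X * V k)) * (W k)ᴴ =
        ((W k * (W k)ᴴ) * A * W k) * ptrG ((V k)ᴴ * X * V k) * (W k)ᴴ by
      simp only [Matrix.mul_assoc], ← hWA k]
    simp only [Matrix.mul_assoc]


end
end

section
/- Let A be a unital *-subalgebra of B(H) with Wedderburn decomposition A = U(⊕_{k=1}^K B(H_{F,k}) ⊗ 1_{G,k})U*, and let R, J be the CPTP factors of the orthogonal conditional expectation onto A. For C ∈ B(H), write C = Σ_{j,k,ℓ} V_j (C^{(j,k)}_{ℓ,F} ⊗ G^{(j,k)}_ℓ) V_k* using orthonormal operator bases {G^{(j,k)}_ℓ} of B(H_{G,j}, H_{G,k}). Define for each block-diagonal index e and each ℓ the operator Č_{ℓ,e} = Σ_k W_{k−e} (C^{(k−e,k)}_{ℓ,F}/dim(H_{G,k})^{1/2}) W_k*. Then R(C J(ρ̌) C*) = Σ_{ℓ,e} Č_{ℓ,e} ρ̌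 Č_{ℓ,e}* for every ρ̌ in the reduced algebra Ǎ. -/
/-! STATEMENT 4: Kraus reduction of the CP map ρ ↦ CρC* through the CPTP factors of the
orthogonal conditional expectation, using the operator-Schmidt block decomposition of C. -/

open Matrix
open scoped Kronecker BigOperators

noncomputable section

variable {K n m : ℕ} {dF dG : Fin K → ℕ}

/-- The reduced Kraus operators `Č_{ℓ,e} = Σ_k W_{k-e} (C^{(k-e,k)}_{ℓ,F}/√dim(H_{G,k})) W_k*`,
indexed by the Schmidt index `ℓ` and the block-diagonal index `e ∈ ℤ`. -/
def redKraus (dG : Fin K → ℕ) (W : ∀ k : Fin K, Matrix (Fin m) (Fin (dF k)) ℂ)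
    {d : ℕ} (CF : ∀ j k : Fin K, Fin d → Matrix (Fin (dF j)) (Fin (dF k)) ℂ)
    (ℓ : Fin d) (e : ℤ) : Mat m :=
  ∑ j : Fin K, ∑ k : Fin K,
    if ((k : ℤ) - (j : ℤ) = e) then
      ((Real.sqrt (dG k) : ℂ))⁻¹ • (W j * CF j k ℓ * (W k)ᴴ)
    else 0

/-! ### Auxiliary lemmas -/

lemma ptrG_kron {a b : ℕ} (A : Matrix (Fin a) (Fin a) ℂ) (B : Matrix (Fin b) (Fin b) ℂ) :
    ptrG (A ⊗ₖ B) = B.trace • A := by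
  ext i j
  simp only [ptrG, Matrix.of_apply, Matrix.kroneckerMap_apply, Matrix.smul_apply,
    Matrix.trace, Matrix.diag, smul_eq_mul, Finset.sum_mul]
  exact Finset.sum_congr rfl fun g _ => mul_comm _ _

lemma ptrG_sum {a b : ℕ} {ι : Type*} (s : Finset ι)
    (f : ι → Matrix (Fin a × Fin b) (Fin a × Fin b) ℂ) :
    ptrG (∑ i ∈ s, f i) = ∑ i ∈ s, ptrG (f i) := by
  ext i j
  simp only [ptrG, Matrix.of_apply, Matrix.sum_apply]
  exact Finset.sum_comm

lemma ptrG_smul {a b : ℕ} (c : ℂ) (M : Matrix (Fin a × Fin b) (Fin a × Fin b) ℂ) :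
    ptrG (c • M) = c • ptrG M := by
  ext i j
  simp only [ptrG, Matrix.of_apply, Matrix.smul_apply, smul_eq_mul, Finset.mul_sum]

lemma kron_conjTranspose {a b c e : ℕ} (A : Matrix (Fin a) (Fin b) ℂ)
    (B : Matrix (Fin c) (Fin e) ℂ) : (A ⊗ₖ B)ᴴ = Aᴴ ⊗ₖ Bᴴ := by
  ext ⟨i, g⟩ ⟨j, h⟩
  simp [Matrix.conjTranspose_apply, Matrix.kroneckerMap_apply]

theorem reduced_Kraus_representation
    (V : ∀ k : Fin K, Matrix (Fin n) (Fin (dF k) × Fin (dG k)) ℂ)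
    (W : ∀ k : Fin K, Matrix (Fin m) (Fin (dF k)) ℂ)
    (hVortho : ∀ k, (V k)ᴴ * V k = 1)
    (hVdisj : ∀ j k, j ≠ k → (V j)ᴴ * V k = 0)
    (hVcomplete : ∑ k : Fin K, V k * (V k)ᴴ = 1)
    (hWortho : ∀ k, (W k)ᴴ * W k = 1)
    (hWdisj : ∀ j k, j ≠ k → (W j)ᴴ * W k = 0)
    (hWcomplete : ∑ k : Fin K, W k * (W k)ᴴ = 1)
    (hdG : ∀ k, 0 < dG k)
    {d : ℕ} (C : Mat n)
    (CF : ∀ j k : Fin K, Fin d → Matrix (Fin (dF j)) (Fin (dF k)) ℂ)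
    (GG : ∀ j k : Fin K, Fin d → Matrix (Fin (dG j)) (Fin (dG k)) ℂ)
    -- operator-Schmidt block decomposition of C
    (hC : C = ∑ j : Fin K, ∑ k : Fin K, ∑ ℓ : Fin d,
      V j * ((CF j k ℓ) ⊗ₖ (GG j k ℓ)) * (V k)ᴴ)
    -- orthonormality of the G-side Schmidt bases (padded with zeros)
    (hGorth : ∀ (j k : Fin K) (ℓ f : Fin d), ℓ ≠ f → ((GG j k ℓ)ᴴ * GG j k f).trace = 0)
    (hGnorm : ∀ (j k : Fin K) (ℓ : Fin d), GG j k ℓ ≠ 0 → ((GG j k ℓ)ᴴ * GG j k ℓ).trace = 1)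
    (hpad : ∀ (j k : Fin K) (ℓ : Fin d), GG j k ℓ = 0 → CF j k ℓ = 0) :
    ∀ ρ : Mat m, IsBlockDiag W ρ →
      Rmap V W (C * Jmap V W ρ * Cᴴ) =
        ∑ e ∈ Finset.Icc (-(K : ℤ) + 1) ((K : ℤ) - 1), ∑ ℓ : Fin d,
          redKraus dG W CF ℓ e * ρ * (redKraus dG W CF ℓ e)ᴴ := by
  intro ρ hρ
  classical
  -- off-diagonal sandwiches of a block-diagonal ρ vanish
  have hWsand : ∀ k k' : Fin K, k ≠ k' → (W k)ᴴ * ρ * W k' = 0 := by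
    intro k k' hkk
    have hexp : (W k)ᴴ * ρ * W k'
        = ∑ r : Fin K, ((W k)ᴴ * W r) * ((W r)ᴴ * ρ * W r) * ((W r)ᴴ * W k') := by
      conv_lhs => rw [hρ]
      rw [Matrix.mul_sum, Matrix.sum_mul]
      exact Finset.sum_congr rfl fun r _ => by simp only [Matrix.mul_assoc]
    rw [hexp]
    apply Finset.sum_eq_zero
    intro r _
    by_cases hr : k = r
    · have hr' : r ≠ k' := by rw [← hr]; exact hkk
      rw [hWdisj r k' hr', Matrix.mul_zero]
    · rw [hWdisj k r hr, Matrix.zero_mul, Matrix.zero_mul]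
  -- compressed blocks of C
  have hVCV : ∀ k q : Fin K, (V k)ᴴ * C * V q = ∑ ℓ : Fin d, CF k q ℓ ⊗ₖ GG k q ℓ := by
    intro k q
    rw [hC, Matrix.mul_sum, Matrix.sum_mul, Finset.sum_eq_single k]
    · rw [Matrix.mul_sum, Matrix.sum_mul, Finset.sum_eq_single q]
      · rw [Matrix.mul_sum, Matrix.sum_mul]
        refine Finset.sum_congr rfl fun ℓ _ => ?_
        simp only [Matrix.mul_assoc]
        rw [hVortho q, Matrix.mul_one, ← Matrix.mul_assoc, hVortho k, Matrix.one_mul]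
      · intro k' _ hk'
        rw [Matrix.mul_sum, Matrix.sum_mul]
        apply Finset.sum_eq_zero
        intro ℓ _
        simp only [Matrix.mul_assoc]
        rw [hVdisj k' q hk', Matrix.mul_zero, Matrix.mul_zero, Matrix.mul_zero]
      · intro h; exact absurd (Finset.mem_univ q) h
    · intro j _ hj
      rw [Matrix.mul_sum, Matrix.sum_mul]
      apply Finset.sum_eq_zero
      intro k' _
      rw [Matrix.mul_sum, Matrix.sum_mul]
      apply Finset.sum_eq_zero
      intro ℓ _
      simp only [← Matrix.mul_assoc]
      rw [hVdisj k j (Ne.symm hj), Matrix.zero_mul, Matrix.zero_mul, Matrix.zero_mul]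
    · intro h; exact absurd (Finset.mem_univ k) h
  have hVCVadj : ∀ k q : Fin K,
      (V q)ᴴ * Cᴴ * V k = ∑ f : Fin d, (CF k q f)ᴴ ⊗ₖ (GG k q f)ᴴ := by
    intro k q
    have h1 : (V q)ᴴ * Cᴴ * V k = ((V k)ᴴ * C * V q)ᴴ := by
      simp only [Matrix.conjTranspose_mul, Matrix.conjTranspose_conjTranspose,
        Matrix.mul_assoc]
    rw [h1, hVCV k q, Matrix.conjTranspose_sum]
    exact Finset.sum_congr rfl fun f _ => kron_conjTranspose _ _
  -- compressed blocks of C J(ρ) C*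
  have hinner : ∀ k : Fin K, (V k)ᴴ * (C * Jmap V W ρ * Cᴴ) * V k =
      ∑ q : Fin K, (∑ ℓ : Fin d, CF k q ℓ ⊗ₖ GG k q ℓ) *
        (((W q)ᴴ * ρ * W q) ⊗ₖ (((dG q : ℂ))⁻¹ • (1 : Matrix (Fin (dG q)) (Fin (dG q)) ℂ))) *
        (∑ f : Fin d, (CF k q f)ᴴ ⊗ₖ (GG k q f)ᴴ) := by
    intro k
    conv_lhs => rw [Jmap]
    conv_lhs => simp only [Matrix.mul_sum, Matrix.sum_mul]
    refine Finset.sum_congr rfl fun q _ => ?_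
    conv_rhs => rw [← hVCV k q, ← hVCVadj k q]
    simp only [Matrix.mul_assoc]
  -- expand the kronecker products
  have hprod : ∀ k q : Fin K,
      (∑ ℓ : Fin d, CF k q ℓ ⊗ₖ GG k q ℓ) *
        (((W q)ᴴ * ρ * W q) ⊗ₖ (((dG q : ℂ))⁻¹ • (1 : Matrix (Fin (dG q)) (Fin (dG q)) ℂ))) *
        (∑ f : Fin d, (CF k q f)ᴴ ⊗ₖ (GG k q f)ᴴ)
      = ∑ ℓ : Fin d, ∑ f : Fin d,
          ((dG q : ℂ))⁻¹ • ((CF k q ℓ * ((W q)ᴴ * ρ * W q) * (CF k q f)ᴴ) ⊗ₖ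
            (GG k q ℓ * (GG k q f)ᴴ)) := by
    intro k q
    rw [Matrix.sum_mul, Matrix.sum_mul]
    refine Finset.sum_congr rfl fun ℓ _ => ?_
    rw [Matrix.mul_sum]
    refine Finset.sum_congr rfl fun f _ => ?_
    rw [Matrix.kronecker_smul, Matrix.mul_smul, Matrix.smul_mul,
      ← Matrix.mul_kronecker_mul, ← Matrix.mul_kronecker_mul, Matrix.mul_one]
  -- the Schmidt index collapses under the partial trace
  have hptr : ∀ (k q : Fin K) (ℓ : Fin d),
      (∑ f : Fin d, W k * (((dG q : ℂ))⁻¹ • ((GG k q ℓ * (GG k q f)ᴴ).trace •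
        (CF k q ℓ * ((W q)ᴴ * ρ * W q) * (CF k q f)ᴴ))) * (W k)ᴴ)
      = ((dG q : ℂ))⁻¹ •
          (W k * (CF k q ℓ * ((W q)ᴴ * ρ * W q) * (CF k q ℓ)ᴴ) * (W k)ᴴ) := by
    intro k q ℓ
    rw [Finset.sum_eq_single ℓ]
    · by_cases hz : GG k q ℓ = 0
      · rw [hpad k q ℓ hz]
        simp
      · rw [Matrix.trace_mul_comm, hGnorm k q ℓ hz, one_smul, Matrix.mul_smul,
          Matrix.smul_mul]
    · intro f _ hf
      rw [Matrix.trace_mul_comm, hGorth k q f ℓ hf, zero_smul, smul_zero,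
        Matrix.mul_zero, Matrix.zero_mul]
    · intro h; exact absurd (Finset.mem_univ ℓ) h
  -- the left-hand side in canonical form
  have hLHS : Rmap V W (C * Jmap V W ρ * Cᴴ) =
      ∑ k : Fin K, ∑ q : Fin K, ∑ ℓ : Fin d, ((dG q : ℂ))⁻¹ •
        (W k * (CF k q ℓ * ((W q)ᴴ * ρ * W q) * (CF k q ℓ)ᴴ) * (W k)ᴴ) := by
    rw [Rmap]
    refine Finset.sum_congr rfl fun k _ => ?_
    rw [hinner k, ptrG_sum, Matrix.mul_sum, Matrix.sum_mul]
    refine Finset.sum_congr rfl fun q _ => ?_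
    rw [hprod k q]
    simp only [ptrG_sum, ptrG_smul, ptrG_kron, Matrix.mul_sum, Matrix.sum_mul]
    exact Finset.sum_congr rfl fun ℓ _ => hptr k q ℓ
  -- scalar and conjugation facts
  have hsq : ∀ q : Fin K, ((Real.sqrt (dG q) : ℂ))⁻¹ * ((Real.sqrt (dG q) : ℂ))⁻¹
      = ((dG q : ℂ))⁻¹ := by
    intro q
    rw [← mul_inv, ← Complex.ofReal_mul, Real.mul_self_sqrt (Nat.cast_nonneg _),
      Complex.ofReal_natCast]
  have hstar : ∀ q : Fin K,
      star (((Real.sqrt (dG q) : ℂ))⁻¹) = ((Real.sqrt (dG q) : ℂ))⁻¹ := by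
    intro q
    simp [Complex.star_def, map_inv₀, Complex.conj_ofReal]
  -- adjoint of the reduced Kraus operators
  have hadj : ∀ (ℓ : Fin d) (e : ℤ), (redKraus dG W CF ℓ e)ᴴ =
      ∑ j : Fin K, ∑ k : Fin K, if ((k : ℤ) - (j : ℤ) = e) then
        ((Real.sqrt (dG k) : ℂ))⁻¹ • (W k * ((CF j k ℓ)ᴴ * (W j)ᴴ)) else 0 := by
    intro ℓ e
    rw [redKraus, Matrix.conjTranspose_sum]
    refine Finset.sum_congr rfl fun j _ => ?_
    rw [Matrix.conjTranspose_sum]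
    refine Finset.sum_congr rfl fun k _ => ?_
    split_ifs with h
    · rw [Matrix.conjTranspose_smul, hstar k]
      congr 1
      simp only [Matrix.conjTranspose_mul, Matrix.conjTranspose_conjTranspose,
        Matrix.mul_assoc]
    · simp
  -- individual terms in the quadruple sum
  have hterm : ∀ (ℓ : Fin d) (e : ℤ) (j k j' k' : Fin K),
      (if ((k : ℤ) - (j : ℤ) = e) then
        ((Real.sqrt (dG k) : ℂ))⁻¹ • (W j * CF j k ℓ * (W k)ᴴ) else 0) * ρ *
      (if ((k' : ℤ) - (j' : ℤ) = e) then
        ((Real.sqrt (dG k') : ℂ))⁻¹ • (W k' * ((CF j' k' ℓ)ᴴ * (W j')ᴴ)) else 0)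
      = if k' = k then (if j' = j then (if ((k : ℤ) - (j : ℤ) = e) then
          ((dG k : ℂ))⁻¹ •
            (W j * CF j k ℓ * ((W k)ᴴ * ρ * W k) * (CF j k ℓ)ᴴ * (W j)ᴴ) else 0)
          else 0) else 0 := by
    intro ℓ e j k j' k'
    by_cases hP : ((k : ℤ) - (j : ℤ) = e)
    · by_cases hk' : k' = k
      · subst hk'
        by_cases hj' : j' = j
        · subst hj'
          rw [if_pos hP, if_pos hP, if_pos rfl, if_pos rfl, if_pos hP]
          rw [Matrix.smul_mul, Matrix.smul_mul, Matrix.mul_smul, smul_smul, hsq k']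
          congr 1
          simp only [Matrix.mul_assoc]
        · rw [if_pos rfl, if_neg hj']
          have hQ : ¬ ((k' : ℤ) - (j' : ℤ) = e) := by
            intro h
            apply hj'
            have hjj : (j' : ℤ) = (j : ℤ) := by omega
            exact Fin.ext (by exact_mod_cast hjj)
          rw [if_neg hQ, Matrix.mul_zero]
      · rw [if_neg hk', if_pos hP]
        by_cases hQ : ((k' : ℤ) - (j' : ℤ) = e)
        · rw [if_pos hQ]
          rw [Matrix.smul_mul, Matrix.smul_mul, Matrix.mul_smul, smul_smul]
          have hzero : W j * CF j k ℓ * (W k)ᴴ * ρ *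
              (W k' * ((CF j' k' ℓ)ᴴ * (W j')ᴴ))
              = (W j * CF j k ℓ) * ((W k)ᴴ * ρ * W k') * ((CF j' k' ℓ)ᴴ * (W j')ᴴ) := by
            simp only [Matrix.mul_assoc]
          rw [hzero, hWsand k k' (Ne.symm hk'), Matrix.mul_zero, Matrix.zero_mul,
            smul_zero]
        · rw [if_neg hQ, Matrix.mul_zero]
    · simp [hP]
  -- reduced Kraus sandwich in canonical form
  have hred : ∀ (ℓ : Fin d) (e : ℤ),
      redKraus dG W CF ℓ e * ρ * (redKraus dG W CF ℓ e)ᴴ =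
      ∑ j : Fin K, ∑ k : Fin K, if ((k : ℤ) - (j : ℤ) = e) then
        ((dG k : ℂ))⁻¹ •
          (W j * CF j k ℓ * ((W k)ᴴ * ρ * W k) * (CF j k ℓ)ᴴ * (W j)ᴴ) else 0 := by
    intro ℓ e
    rw [hadj ℓ e, redKraus]
    simp only [Matrix.sum_mul, Matrix.mul_sum]
    refine Finset.sum_congr rfl fun j _ => Finset.sum_congr rfl fun k _ => ?_
    simp only [hterm ℓ e]
    simp only [Finset.sum_ite_eq, Finset.mem_univ, if_true]
  -- assemble
  have hRHS : (∑ e ∈ Finset.Icc (-(K : ℤ) + 1) ((K : ℤ) - 1), ∑ ℓ : Fin d,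
      redKraus dG W CF ℓ e * ρ * (redKraus dG W CF ℓ e)ᴴ)
      = ∑ j : Fin K, ∑ k : Fin K, ∑ ℓ : Fin d, ((dG k : ℂ))⁻¹ •
          (W j * CF j k ℓ * ((W k)ᴴ * ρ * W k) * (CF j k ℓ)ᴴ * (W j)ᴴ) := by
    have step1 : (∑ e ∈ Finset.Icc (-(K : ℤ) + 1) ((K : ℤ) - 1), ∑ ℓ : Fin d,
        redKraus dG W CF ℓ e * ρ * (redKraus dG W CF ℓ e)ᴴ)
        = ∑ e ∈ Finset.Icc (-(K : ℤ) + 1) ((K : ℤ) - 1), ∑ ℓ : Fin d,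
            ∑ j : Fin K, ∑ k : Fin K, if ((k : ℤ) - (j : ℤ) = e) then
              ((dG k : ℂ))⁻¹ •
                (W j * CF j k ℓ * ((W k)ᴴ * ρ * W k) * (CF j k ℓ)ᴴ * (W j)ᴴ) else 0 :=
      Finset.sum_congr rfl fun e _ => Finset.sum_congr rfl fun ℓ _ => hred ℓ e
    rw [step1]
    rw [Finset.sum_comm]
    -- now : ∑ ℓ, ∑ e, ∑ j, ∑ k
    have step2 : ∀ ℓ : Fin d,
        (∑ e ∈ Finset.Icc (-(K : ℤ) + 1) ((K : ℤ) - 1),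
          ∑ j : Fin K, ∑ k : Fin K, if ((k : ℤ) - (j : ℤ) = e) then
            ((dG k : ℂ))⁻¹ •
              (W j * CF j k ℓ * ((W k)ᴴ * ρ * W k) * (CF j k ℓ)ᴴ * (W j)ᴴ) else 0)
        = ∑ j : Fin K, ∑ k : Fin K, ((dG k : ℂ))⁻¹ •
            (W j * CF j k ℓ * ((W k)ᴴ * ρ * W k) * (CF j k ℓ)ᴴ * (W j)ᴴ) := by
      intro ℓ
      rw [Finset.sum_comm]
      refine Finset.sum_congr rfl fun j _ => ?_
      rw [Finset.sum_comm]
      refine Finset.sum_congr rfl fun k _ => ?_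
      rw [Finset.sum_ite_eq, if_pos]
      rw [Finset.mem_Icc]
      have h1 : (j : ℕ) < K := j.isLt
      have h2 : (k : ℕ) < K := k.isLt
      omega
    calc (∑ ℓ : Fin d, ∑ e ∈ Finset.Icc (-(K : ℤ) + 1) ((K : ℤ) - 1),
          ∑ j : Fin K, ∑ k : Fin K, if ((k : ℤ) - (j : ℤ) = e) then
            ((dG k : ℂ))⁻¹ •
              (W j * CF j k ℓ * ((W k)ᴴ * ρ * W k) * (CF j k ℓ)ᴴ * (W j)ᴴ) else 0)
        = ∑ ℓ : Fin d, ∑ j : Fin K, ∑ k : Fin K, ((dG k : ℂ))⁻¹ •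
            (W j * CF j k ℓ * ((W k)ᴴ * ρ * W k) * (CF j k ℓ)ᴴ * (W j)ᴴ) :=
          Finset.sum_congr rfl fun ℓ _ => step2 ℓ
      _ = ∑ j : Fin K, ∑ k : Fin K, ∑ ℓ : Fin d, ((dG k : ℂ))⁻¹ •
            (W j * CF j k ℓ * ((W k)ᴴ * ρ * W k) * (CF j k ℓ)ᴴ * (W j)ᴴ) := by
          rw [Finset.sum_comm]
          exact Finset.sum_congr rfl fun j _ => Finset.sum_comm
  rw [hLHS, hRHS]
  refine Finset.sum_congr rfl fun j _ => Finset.sum_congr rfl fun k _ =>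
    Finset.sum_congr rfl fun ℓ _ => ?_
  congr 1
  simp only [Matrix.mul_assoc]

end
end

section
/- With P and U_N defined as in the spin-chain construction, for every N ≥ 2 and every 1 ≤ j ≤ N−1 it holds that U_N (σ_x^{(j)} σ_x^{(j+1)}) U_N* = σ_x^{(j+1)}. -/
/-! STATEMENT 11: for every N ≥ 2 and adjacent pair (j, j+1), U_N conjugates
σx^{(j)}σx^{(j+1)} to σx^{(j+1)}. -/

open Matrix
open scoped Kronecker BigOperators Matrix

noncomputable section

/-- Matrices acting on the N-qubit Hilbert space (ℂ²)^{⊗N}. -/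
abbrev QMat (N : ℕ) : Type := Matrix (Fin N → Fin 2) (Fin N → Fin 2) ℂ

def pauliX : Matrix (Fin 2) (Fin 2) ℂ := !![0, 1; 1, 0]
def pauliY : Matrix (Fin 2) (Fin 2) ℂ := !![0, -Complex.I; Complex.I, 0]
def pauliZ : Matrix (Fin 2) (Fin 2) ℂ := !![1, 0; 0, -1]

/-- The local operator `σ_q^{(j)} = 1 ⊗ ⋯ ⊗ A ⊗ ⋯ ⊗ 1` acting on the j-th qubit. -/
def localOp (N : ℕ) (j : Fin N) (A : Matrix (Fin 2) (Fin 2) ℂ) : QMat N :=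
  Matrix.of fun v w =>
    ∏ i : Fin N, if i = j then A (v i) (w i) else (if v i = w i then (1 : ℂ) else 0)

/-- The two-qubit permutation matrix
`P = ½(1₄ + σx⊗1₂ + 1₂⊗σz − σx⊗σz)`, i.e. the matrix with rows e₁, e₄, e₃, e₂. -/
def Pmat : Matrix (Fin 2 × Fin 2) (Fin 2 × Fin 2) ℂ :=
  (2⁻¹ : ℂ) • ((1 : Matrix (Fin 2 × Fin 2) (Fin 2 × Fin 2) ℂ)
    + pauliX ⊗ₖ (1 : Matrix (Fin 2) (Fin 2) ℂ)
    + (1 : Matrix (Fin 2) (Fin 2) ℂ) ⊗ₖ pauliZ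
    - pauliX ⊗ₖ pauliZ)

/-- The recursively defined unitaries: `U₁ = 1₂`, `U_N = (P ⊗ 1)(1₂ ⊗ U_{N−1})`. -/
def Umat : (N : ℕ) → QMat N
  | 0 => 1
  | 1 => 1
  | (N + 2) =>
      (Matrix.of fun v w =>
        Pmat (v 0, v 1) (w 0, w 1) *
          ∏ i : Fin (N + 2), if 2 ≤ (i : ℕ) then (if v i = w i then (1 : ℂ) else 0) else 1) *
      (Matrix.of fun v w =>
        (if v 0 = w 0 then (1 : ℂ) else 0) *
          Umat (N + 1) (fun i => v i.succ) (fun i => w i.succ))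

/-! ### Auxiliary embeddings -/

/-- Embedding `A ⊗ M` of a one-qubit operator on the first site tensored with the rest. -/
def embP {n : ℕ} (A : Matrix (Fin 2) (Fin 2) ℂ) (M : QMat n) : QMat (n+1) :=
  Matrix.of fun v w => A (v 0) (w 0) * M (fun i => v i.succ) (fun i => w i.succ)

/-- Embedding `M ⊗ K` of a two-qubit operator on the first two sites tensored with the rest. -/
def embQ {n : ℕ} (M : Matrix (Fin 2 × Fin 2) (Fin 2 × Fin 2) ℂ) (K : QMat n) : QMat (n+2) :=
  Matrix.of fun v w =>
    M (v 0, v 1) (w 0, w 1) * K (fun i => v i.succ.succ) (fun i => w i.succ.succ)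

lemma delta_prod {n : ℕ} (x y : Fin n → Fin 2) :
    (∏ i : Fin n, if x i = y i then (1:ℂ) else 0) = if x = y then 1 else 0 := by
  by_cases h : x = y
  · simp [h]
  · rw [if_neg h]
    obtain ⟨i, hi⟩ := Function.ne_iff.mp h
    exact Finset.prod_eq_zero (Finset.mem_univ i) (if_neg hi)

lemma sum_split {n : ℕ} (f : (Fin (n+1) → Fin 2) → ℂ) :
    ∑ u, f u = ∑ a : Fin 2, ∑ t : Fin n → Fin 2, f (Fin.cons a t) := by
  rw [← (Fin.consEquiv (fun _ : Fin (n+1) => Fin 2)).sum_comp, Fintype.sum_prod_type]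
  rfl

lemma sum_split2 {n : ℕ} (f : (Fin (n+2) → Fin 2) → ℂ) :
    ∑ u, f u = ∑ a : Fin 2, ∑ b : Fin 2, ∑ t : Fin n → Fin 2, f (Fin.cons a (Fin.cons b t)) := by
  rw [sum_split]
  exact Finset.sum_congr rfl fun a _ => sum_split _

lemma embP_mul {n} (A B : Matrix (Fin 2) (Fin 2) ℂ) (M N : QMat n) :
    embP A M * embP B N = embP (A*B) (M*N) := by
  ext v w
  simp only [embP, Matrix.mul_apply, Matrix.of_apply]
  rw [sum_split, Finset.sum_mul_sum]
  refine Finset.sum_congr rfl fun a _ => Finset.sum_congr rfl fun t _ => ?_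
  simp only [Fin.cons_succ, Fin.cons_zero]
  ring

lemma embP_conjT {n} (A : Matrix (Fin 2) (Fin 2) ℂ) (M : QMat n) :
    (embP A M)ᴴ = embP Aᴴ Mᴴ := by
  ext v w
  simp [embP, Matrix.conjTranspose_apply, star_mul']

lemma embQ_mul {n} (M M' : Matrix (Fin 2 × Fin 2) (Fin 2 × Fin 2) ℂ) (K K' : QMat n) :
    embQ M K * embQ M' K' = embQ (M*M') (K*K') := by
  ext v w
  simp only [embQ, Matrix.mul_apply, Matrix.of_apply]
  rw [sum_split2, Finset.sum_mul_sum, Fintype.sum_prod_type]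
  refine Finset.sum_congr rfl fun a _ => ?_
  refine Finset.sum_congr rfl fun b _ => ?_
  refine Finset.sum_congr rfl fun t _ => ?_
  simp only [← Fin.succ_zero_eq_one, Fin.cons_succ, Fin.cons_zero]
  ring

lemma embQ_conjT {n} (M : Matrix (Fin 2 × Fin 2) (Fin 2 × Fin 2) ℂ) (K : QMat n) :
    (embQ M K)ᴴ = embQ Mᴴ Kᴴ := by
  ext v w
  simp [embQ, Matrix.conjTranspose_apply, star_mul']

lemma embP_embP {n} (A B : Matrix (Fin 2) (Fin 2) ℂ) (K : QMat n) :
    embP A (embP B K) = embQ (A ⊗ₖ B) K := by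
  ext v w
  simp only [embP, embQ, Matrix.of_apply, Matrix.kroneckerMap_apply, ← Fin.succ_zero_eq_one]
  ring

lemma embP_one {n} : embP (1 : Matrix (Fin 2) (Fin 2) ℂ) (1 : QMat n) = 1 := by
  ext v w
  have key : v = w ↔ (v 0 = w 0 ∧ (fun i : Fin n => v i.succ) = (fun i : Fin n => w i.succ)) := by
    constructor
    · rintro rfl; exact ⟨rfl, rfl⟩
    · rintro ⟨h0, ht⟩
      funext i
      induction i using Fin.cases with
      | zero => exact h0
      | succ j => exact congrFun ht j
  simp only [embP, Matrix.of_apply, Matrix.one_apply]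
  by_cases h0 : v 0 = w 0 <;>
    by_cases ht : (fun i : Fin n => v i.succ) = (fun i : Fin n => w i.succ) <;>
    simp [h0, ht, key]

lemma embQ_one {n} :
    embQ (1 : Matrix (Fin 2 × Fin 2) (Fin 2 × Fin 2) ℂ) (1 : QMat n) = 1 := by
  rw [← Matrix.one_kronecker_one, ← embP_embP, embP_one, embP_one]

/-! ### Concrete facts about `Pmat` -/

lemma pauliX_apply (a b : Fin 2) : pauliX a b = if a = b then 0 else 1 := by
  fin_cases a <;> fin_cases b <;> simp [pauliX]

lemma Pmat_apply (a b c d : Fin 2) :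
    Pmat (a, b) (c, d) = if c = a + b ∧ d = b then 1 else 0 := by
  fin_cases a <;> fin_cases b <;> fin_cases c <;> fin_cases d <;>
    norm_num [Pmat, pauliX, pauliZ, Matrix.smul_apply, Matrix.add_apply, Matrix.sub_apply,
      Matrix.one_apply, Matrix.kroneckerMap_apply, Prod.ext_iff] <;>
    simp (config := { decide := true })

lemma Pmat_conjT : Pmatᴴ = Pmat := by
  ext ⟨a,b⟩ ⟨c,d⟩
  simp only [Matrix.conjTranspose_apply, Pmat_apply]
  fin_cases a <;> fin_cases b <;> fin_cases c <;> fin_cases d <;>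
    simp (config := { decide := true })

lemma Pmat_mul_Pmat : Pmat * Pmat = 1 := by
  ext ⟨a,b⟩ ⟨c,d⟩
  simp only [Matrix.mul_apply, Fintype.sum_prod_type, Fin.sum_univ_two, Pmat_apply,
    Matrix.one_apply, Prod.ext_iff]
  fin_cases a <;> fin_cases b <;> fin_cases c <;> fin_cases d <;>
    simp (config := { decide := true })

lemma P_X1_P : Pmat * (pauliX ⊗ₖ (1 : Matrix (Fin 2) (Fin 2) ℂ)) * Pmat
    = pauliX ⊗ₖ (1 : Matrix (Fin 2) (Fin 2) ℂ) := by
  ext ⟨a,b⟩ ⟨c,d⟩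
  simp only [Matrix.mul_apply, Fintype.sum_prod_type, Fin.sum_univ_two, Pmat_apply,
    Matrix.one_apply, Matrix.kroneckerMap_apply, pauliX_apply]
  fin_cases a <;> fin_cases b <;> fin_cases c <;> fin_cases d <;>
    simp (config := { decide := true })

lemma P_XX_P : Pmat * (pauliX ⊗ₖ pauliX) * Pmat
    = (1 : Matrix (Fin 2) (Fin 2) ℂ) ⊗ₖ pauliX := by
  ext ⟨a,b⟩ ⟨c,d⟩
  simp only [Matrix.mul_apply, Fintype.sum_prod_type, Fin.sum_univ_two, Pmat_apply,
    Matrix.one_apply, Matrix.kroneckerMap_apply, pauliX_apply]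
  fin_cases a <;> fin_cases b <;> fin_cases c <;> fin_cases d <;>
    simp (config := { decide := true })

/-! ### Structure of `localOp` and `Umat` -/

lemma localOp_zero {n : ℕ} (j : Fin (n+1)) (hj : (j : ℕ) = 0)
    (A : Matrix (Fin 2) (Fin 2) ℂ) :
    localOp (n+1) j A = embP A 1 := by
  have hj0 : j = 0 := Fin.ext (by simpa using hj)
  subst hj0
  ext v w
  simp only [localOp, Matrix.of_apply, embP]
  rw [Fin.prod_univ_succ]
  simp only [Fin.succ_ne_zero, if_false, if_pos rfl]
  rw [delta_prod]
  simp [Matrix.one_apply]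

lemma localOp_succ {n : ℕ} (j : ℕ) (h : j + 1 < n + 1) (A : Matrix (Fin 2) (Fin 2) ℂ) :
    localOp (n+1) ⟨j+1, h⟩ A
      = embP 1 (localOp n ⟨j, Nat.succ_lt_succ_iff.mp h⟩ A) := by
  ext v w
  simp only [localOp, Matrix.of_apply, embP, Matrix.one_apply]
  rw [Fin.prod_univ_succ, if_neg (show ¬ (0 : Fin (n+1)) = ⟨j+1, h⟩ by simp [Fin.ext_iff])]
  congr 1
  refine Finset.prod_congr rfl fun i _ => ?_
  refine if_congr ?_ rfl rfl
  rw [Fin.ext_iff, Fin.ext_iff]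
  simp [Fin.val_succ]

lemma Umat_succ (n : ℕ) : Umat (n+2) = embQ Pmat 1 * embP 1 (Umat (n+1)) := by
  have h1 : (Matrix.of fun v w : Fin (n+2) → Fin 2 =>
      Pmat (v 0, v 1) (w 0, w 1) *
        ∏ i : Fin (n + 2), if 2 ≤ (i : ℕ) then (if v i = w i then (1 : ℂ) else 0) else 1)
      = embQ Pmat (1 : QMat n) := by
    ext v w
    simp only [Matrix.of_apply, embQ]
    congr 1
    rw [Fin.prod_univ_succ, Fin.prod_univ_succ]
    have h0 : ¬ (2 ≤ ((0 : Fin (n+2)) : ℕ)) := by simp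
    have h1' : ¬ (2 ≤ ((Fin.succ (0 : Fin (n+1))) : ℕ)) := by simp
    have h2 : ∀ i : Fin n, 2 ≤ (((i.succ).succ : Fin (n+2)) : ℕ) := by
      intro i; simp [Fin.val_succ]
    rw [if_neg h0, if_neg h1', one_mul, one_mul]
    rw [Finset.prod_congr rfl fun i _ => if_pos (h2 i), delta_prod]
    simp [Matrix.one_apply]
  have h2 : (Matrix.of fun v w : Fin (n+2) → Fin 2 =>
      (if v 0 = w 0 then (1:ℂ) else 0) *
        Umat (n + 1) (fun i => v i.succ) (fun i => w i.succ))
      = embP 1 (Umat (n+1)) := by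
    ext v w
    simp [embP, Matrix.one_apply]
  rw [Umat, h1, h2]

lemma conj_conj {n} {A B X Y Z : QMat n} (h1 : B * X * Bᴴ = Y) (h2 : A * Y * Aᴴ = Z) :
    (A * B) * X * (A * B)ᴴ = Z := by
  rw [Matrix.conjTranspose_mul, ← h2, ← h1]
  simp only [Matrix.mul_assoc]

lemma Umat_unitary : ∀ n, Umat n * (Umat n)ᴴ = 1
  | 0 => by simp only [Umat]; simp
  | 1 => by simp only [Umat]; simp
  | (n+2) => by
    rw [Umat_succ, Matrix.conjTranspose_mul, embP_conjT, embQ_conjT, Matrix.conjTranspose_one,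
      Pmat_conjT, Matrix.mul_assoc, ← Matrix.mul_assoc (embP 1 (Umat (n+1))),
      embP_mul, one_mul, Umat_unitary (n+1), embP_one, one_mul, embQ_mul, Pmat_mul_Pmat,
      one_mul, Matrix.conjTranspose_one, embQ_one]

lemma Umat_conj_x0 : ∀ m (j : Fin (m+1)), (j : ℕ) = 0 →
    Umat (m+1) * localOp (m+1) j pauliX * (Umat (m+1))ᴴ = localOp (m+1) j pauliX
  | 0, j, hj => by
    simp only [Umat]
    simp
  | (m+1), j, hj => by
    rw [Umat_succ, localOp_zero j hj]
    have h1 : embP 1 (Umat (m+1)) * embP pauliX (1 : QMat (m+1)) * (embP 1 (Umat (m+1)))ᴴ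
        = embP pauliX (1 : QMat (m+1)) := by
      rw [embP_conjT, Matrix.conjTranspose_one, embP_mul, embP_mul]
      simp only [one_mul, mul_one]
      rw [Umat_unitary (m+1)]
    have e1 : embP pauliX (1 : QMat (m+1)) = embQ (pauliX ⊗ₖ 1) (1 : QMat m) := by
      conv_lhs => rw [← embP_one]
      rw [embP_embP]
    have h2 : embQ Pmat 1 * embP pauliX (1 : QMat (m+1)) * (embQ Pmat (1 : QMat m))ᴴ
        = embP pauliX (1 : QMat (m+1)) := by
      rw [e1, embQ_conjT, Matrix.conjTranspose_one, Pmat_conjT, embQ_mul, embQ_mul]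
      simp only [one_mul, mul_one]
      rw [P_X1_P, ← e1]
    exact conj_conj h1 h2

lemma Umat_key : ∀ m (j : ℕ) (h : j + 1 < m + 2),
    Umat (m+2) * (localOp (m+2) ⟨j, Nat.lt_of_succ_lt h⟩ pauliX *
      localOp (m+2) ⟨j+1, h⟩ pauliX) * (Umat (m+2))ᴴ
      = localOp (m+2) ⟨j+1, h⟩ pauliX
  | m, 0, h => by
    rw [Umat_succ, localOp_zero ⟨0, Nat.lt_of_succ_lt h⟩ rfl, localOp_succ 0 h]
    set L := localOp (m+1) ⟨0, Nat.succ_lt_succ_iff.mp h⟩ pauliX with hLdef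
    have hL : L = embP pauliX (1 : QMat m) := localOp_zero _ rfl _
    have h1 : embP 1 (Umat (m+1)) * (embP pauliX 1 * embP 1 L) * (embP 1 (Umat (m+1)))ᴴ
        = embP pauliX L := by
      rw [embP_conjT, Matrix.conjTranspose_one, embP_mul, embP_mul, embP_mul]
      simp only [one_mul, mul_one]
      rw [Umat_conj_x0 m ⟨0, Nat.succ_lt_succ_iff.mp h⟩ rfl]
    have h2 : embQ Pmat 1 * embP pauliX L * (embQ Pmat 1)ᴴ = embP 1 L := by
      rw [hL, embP_embP, embQ_conjT, Matrix.conjTranspose_one, Pmat_conjT, embQ_mul, embQ_mul]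
      simp only [one_mul, mul_one]
      rw [P_XX_P, ← embP_embP, ← hL]
    exact conj_conj h1 h2
  | 0, (j+1), h => by omega
  | (m+1), (j+1), h => by
    have hj : j + 1 < m + 2 := by omega
    rw [Umat_succ, localOp_succ (j+1) h,
      localOp_succ j (Nat.lt_of_succ_lt h)]
    have h1 : embP 1 (Umat (m+2)) *
        (embP 1 (localOp (m+2) ⟨j, Nat.succ_lt_succ_iff.mp (Nat.lt_of_succ_lt h)⟩ pauliX) *
         embP 1 (localOp (m+2) ⟨j+1, Nat.succ_lt_succ_iff.mp h⟩ pauliX)) *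
        (embP 1 (Umat (m+2)))ᴴ
        = embP 1 (localOp (m+2) ⟨j+1, Nat.succ_lt_succ_iff.mp h⟩ pauliX) := by
      rw [embP_conjT, Matrix.conjTranspose_one, embP_mul, embP_mul, embP_mul]
      simp only [one_mul, mul_one]
      rw [Umat_key m j (Nat.succ_lt_succ_iff.mp h)]
    have h2 : embQ Pmat 1 *
        embP 1 (localOp (m+2) ⟨j+1, Nat.succ_lt_succ_iff.mp h⟩ pauliX) *
        (embQ Pmat 1)ᴴ
        = embP 1 (localOp (m+2) ⟨j+1, Nat.succ_lt_succ_iff.mp h⟩ pauliX) := by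
      rw [localOp_succ j (Nat.succ_lt_succ_iff.mp h), embP_embP, embQ_conjT,
        Matrix.conjTranspose_one, Pmat_conjT, embQ_mul, embQ_mul]
      simp only [one_mul, mul_one]
      rw [Matrix.one_kronecker_one, mul_one, Pmat_mul_Pmat, ← Matrix.one_kronecker_one,
        ← embP_embP]
    exact conj_conj h1 h2

theorem Umat_conj_pauliXX (N : ℕ) (hN : 2 ≤ N) (j : Fin N) (h : (j : ℕ) + 1 < N) :
    Umat N * (localOp N j pauliX * localOp N ⟨(j : ℕ) + 1, h⟩ pauliX) * (Umat N)ᴴ =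
      localOp N ⟨(j : ℕ) + 1, h⟩ pauliX := by
  obtain ⟨m, rfl⟩ : ∃ m, N = m + 2 := ⟨N - 2, by omega⟩
  exact Umat_key m (j : ℕ) h

end
end
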